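/- Let A_1, A_2 be Hermitian matrices on a finite-dimensional complex inner product space with A_1 ⪰ I and A_2 ≻ I, let y be a vector, let κ > 0, and define B(t) := f_t(A_1) + f_{1−t}(A_2) and h(t) := −2κ ⟨B(t)^{−1} y, y⟩ for t ∈ (0,1). Then h is differentiable on (0,1) and lim_{t↗1} h'(t) = −κ ⟨ log[ (A_2 − I)(A_2 + I)^{−1} ] y, y ⟩. -/

import Mathlib

open Matrix Filter Set
open scoped ComplexOrder

noncomputable section

variable {n : Type*} [Fintype n] [DecidableEq n]

/-- `f_t(A)` via the continuous functional calculus, where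
`f_t(s) = ((s+1)^t + (s−1)^t)/((s+1)^t − (s−1)^t)`. -/
def fPowMat (t : ℝ) (A : Matrix n n ℂ) : Matrix n n ℂ :=
  cfc (fun s : ℝ => ((s + 1) ^ t + (s - 1) ^ t) / ((s + 1) ^ t - (s - 1) ^ t)) A

/-- Logarithm of a positive definite matrix via the continuous functional calculus. -/
def mlog (A : Matrix n n ℂ) : Matrix n n ℂ := cfc Real.log A

/-- The displacement contribution `h(t) = −2κ ⟨(f_t(A₁) + f_{1−t}(A₂))⁻¹ y, y⟩`. -/
def hDisp (A₁ A₂ : Matrix n n ℂ) (y : n → ℂ) (κ : ℝ) (t : ℝ) : ℝ :=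
  -2 * κ * (star y ⬝ᵥ ((fPowMat t A₁ + fPowMat (1 - t) A₂)⁻¹ *ᵥ y)).re

namespace HDispAux

attribute [local instance] Matrix.linftyOpNormedRing Matrix.linftyOpNormedAlgebra


noncomputable def phi (s t : ℝ) : ℝ :=
  ((s + 1) ^ t + (s - 1) ^ t) / ((s + 1) ^ t - (s - 1) ^ t)

noncomputable def phi' (s t : ℝ) : ℝ :=
  -(2 * ((s + 1) ^ t * (s - 1) ^ t) * (Real.log (s + 1) - Real.log (s - 1))) /
    ((s + 1) ^ t - (s - 1) ^ t) ^ 2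

noncomputable def ell (s : ℝ) : ℝ := Real.log (s + 1) - Real.log (s - 1)

lemma den_pos {s t : ℝ} (hs : 1 < s) (ht : 0 < t) :
    0 < (s + 1) ^ t - (s - 1) ^ t := by
  have : (s - 1) ^ t < (s + 1) ^ t :=
    Real.rpow_lt_rpow (by linarith) (by linarith) ht
  linarith

lemma phi_eq_one {t : ℝ} (ht : t ≠ 0) : phi 1 t = 1 := by
  simp only [phi]
  norm_num [Real.zero_rpow ht]
  exact ne_of_gt (Real.rpow_pos_of_pos two_pos t)

lemma phi_hasDerivAt {s : ℝ} (hs : 1 ≤ s) {t : ℝ} (ht : 0 < t) :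
    HasDerivAt (phi s) (phi' s t) t := by
  rcases eq_or_lt_of_le hs with h1 | h1
  · subst h1
    have h0 : phi' 1 t = 0 := by
      simp [phi', Real.zero_rpow ht.ne']
    rw [h0]
    have : (fun _ : ℝ => (1 : ℝ)) =ᶠ[nhds t] phi 1 := by
      filter_upwards [eventually_ne_nhds ht.ne'] with u hu
      exact (phi_eq_one hu).symm
    exact (hasDerivAt_const t 1).congr_of_eventuallyEq this.symm
  · have ha : (0 : ℝ) < s + 1 := by linarith
    have hb : (0 : ℝ) < s - 1 := by linarith
    have Na : HasDerivAt (fun u : ℝ => (s + 1) ^ u) ((s + 1) ^ t * Real.log (s + 1)) t :=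
      (Real.hasStrictDerivAt_const_rpow ha t).hasDerivAt
    have Nb : HasDerivAt (fun u : ℝ => (s - 1) ^ u) ((s - 1) ^ t * Real.log (s - 1)) t :=
      (Real.hasStrictDerivAt_const_rpow hb t).hasDerivAt
    have hd : (s + 1) ^ t - (s - 1) ^ t ≠ 0 := (den_pos h1 ht).ne'
    have H := (Na.fun_add Nb).div (Na.fun_sub Nb) hd
    refine H.congr_deriv ?_
    have h2 : ((s + 1) ^ t - (s - 1) ^ t) ^ 2 ≠ 0 := pow_ne_zero 2 hd
    rw [phi', div_eq_div_iff h2 h2]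
    ring

lemma ell_pos {s : ℝ} (hs : 1 < s) : 0 < ell s :=
  sub_pos.mpr (Real.log_lt_log (by linarith) (by linarith))

lemma tendsto_inv_slope {s : ℝ} (hs : 1 < s) :
    Tendsto (fun u : ℝ => u / ((s + 1) ^ u - (s - 1) ^ u)) (nhdsWithin 0 (Ioi 0))
      (nhds (ell s)⁻¹) := by
  have ha : (0 : ℝ) < s + 1 := by linarith
  have hb : (0 : ℝ) < s - 1 := by linarith
  have Na : HasDerivAt (fun u : ℝ => (s + 1) ^ u) ((s + 1) ^ (0:ℝ) * Real.log (s + 1)) 0 :=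
    (Real.hasStrictDerivAt_const_rpow ha 0).hasDerivAt
  have Nb : HasDerivAt (fun u : ℝ => (s - 1) ^ u) ((s - 1) ^ (0:ℝ) * Real.log (s - 1)) 0 :=
    (Real.hasStrictDerivAt_const_rpow hb 0).hasDerivAt
  have hF : HasDerivAt (fun u : ℝ => (s + 1) ^ u - (s - 1) ^ u) (ell s) 0 := by
    have := Na.fun_sub Nb
    simpa [ell, Real.rpow_zero] using this
  have hslope := hasDerivAt_iff_tendsto_slope.mp hF
  have hslope' : Tendsto (fun u : ℝ => ((s + 1) ^ u - (s - 1) ^ u) / u)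
      (nhdsWithin 0 (Ioi 0)) (nhds (ell s)) := by
    refine Tendsto.congr' ?_ (hslope.mono_left (nhdsWithin_mono _ ?_))
    · filter_upwards [self_mem_nhdsWithin] with u (hu : (0:ℝ) < u)
      simp [slope_def_field, Real.rpow_zero]
    · intro u hu
      exact (ne_of_gt hu)
  have := hslope'.inv₀ (ne_of_gt (ell_pos hs))
  refine this.congr fun u => ?_
  rw [inv_div]

lemma rpow_continuousAt {a : ℝ} (ha : 0 < a) (t : ℝ) :
    ContinuousAt (fun u : ℝ => a ^ u) t :=
  (Real.hasStrictDerivAt_const_rpow ha t).hasDerivAt.continuousAt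

lemma tendsto_mul_phi {s : ℝ} (hs : 1 < s) :
    Tendsto (fun u : ℝ => u * phi s u) (nhdsWithin 0 (Ioi 0)) (nhds (2 / ell s)) := by
  have ha : (0 : ℝ) < s + 1 := by linarith
  have hb : (0 : ℝ) < s - 1 := by linarith
  have hN : Tendsto (fun u : ℝ => (s + 1) ^ u + (s - 1) ^ u) (nhdsWithin 0 (Ioi 0))
      (nhds 2) := by
    have := ((rpow_continuousAt ha 0).fun_add (rpow_continuousAt hb 0)).tendsto
    simp only [Real.rpow_zero] at this
    norm_num at this
    exact this.mono_left nhdsWithin_le_nhds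
  have hMul := hN.mul (tendsto_inv_slope hs)
  have h2 : (2 : ℝ) * (ell s)⁻¹ = 2 / ell s := by rw [div_eq_mul_inv]
  rw [h2] at hMul
  refine Tendsto.congr' ?_ hMul
  filter_upwards [self_mem_nhdsWithin] with u (hu : (0:ℝ) < u)
  have hd : (s + 1) ^ u - (s - 1) ^ u ≠ 0 := (den_pos hs hu).ne'
  rw [phi]
  field_simp

lemma tendsto_sq_phi' {s : ℝ} (hs : 1 < s) :
    Tendsto (fun u : ℝ => u ^ 2 * phi' s u) (nhdsWithin 0 (Ioi 0)) (nhds (-2 / ell s)) := by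
  have ha : (0 : ℝ) < s + 1 := by linarith
  have hb : (0 : ℝ) < s - 1 := by linarith
  have hN : Tendsto (fun u : ℝ => -(2 * ((s + 1) ^ u * (s - 1) ^ u) * ell s))
      (nhdsWithin 0 (Ioi 0)) (nhds (-(2 * ell s))) := by
    have h1 := (((rpow_continuousAt ha 0).fun_mul (rpow_continuousAt hb 0)).tendsto).mono_left
      (nhdsWithin_le_nhds (a := (0:ℝ)) (s := Ioi (0:ℝ)))
    simp only [Real.rpow_zero, one_mul] at h1
    have h := ((h1.const_mul (2:ℝ)).mul_const (ell s)).neg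
    simpa using h
  have hI := (tendsto_inv_slope hs).pow 2
  have hMul := hN.mul hI
  have h2 : -(2 * ell s) * ((ell s)⁻¹) ^ 2 = -2 / ell s := by
    have : ell s ≠ 0 := (ell_pos hs).ne'
    field_simp
  rw [h2] at hMul
  refine Tendsto.congr' ?_ hMul
  filter_upwards [self_mem_nhdsWithin] with u (hu : (0:ℝ) < u)
  have hd : (s + 1) ^ u - (s - 1) ^ u ≠ 0 := (den_pos hs hu).ne'
  rw [phi', ell]
  field_simp

lemma phi'_one {t : ℝ} (ht : t ≠ 0) : phi' 1 t = 0 := by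
  simp [phi', Real.zero_rpow ht]

lemma phi'_continuousAt {s : ℝ} (hs : 1 < s) {t : ℝ} (ht : 0 < t) :
    ContinuousAt (phi' s) t := by
  have ha : (0 : ℝ) < s + 1 := by linarith
  have hb : (0 : ℝ) < s - 1 := by linarith
  have hd : ((s + 1) ^ t - (s - 1) ^ t) ^ 2 ≠ 0 := pow_ne_zero 2 (den_pos hs ht).ne'
  exact ((((rpow_continuousAt ha t).mul (rpow_continuousAt hb t)).const_mul 2).mul_const
    _).neg.div (((rpow_continuousAt ha t).sub (rpow_continuousAt hb t)).pow 2) hd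

lemma phi_continuousAt {s : ℝ} (hs : 1 < s) {t : ℝ} (ht : 0 < t) :
    ContinuousAt (phi s) t :=
  (phi_hasDerivAt hs.le ht).continuousAt

lemma tendsto_one_sub : Tendsto (fun t : ℝ => 1 - t) (nhdsWithin 1 (Iio 1))
    (nhdsWithin 0 (Ioi 0)) := by
  refine tendsto_nhdsWithin_of_tendsto_nhds_of_eventually_within _ ?_ ?_
  · have hc : Continuous fun t : ℝ => 1 - t := by continuity
    have := hc.tendsto (1 : ℝ)
    simp only [sub_self] at this
    exact this.mono_left nhdsWithin_le_nhds
  · filter_upwards [self_mem_nhdsWithin] with t (ht : t < 1)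
    simpa using ht

lemma eventually_ne_zero : ∀ᶠ t : ℝ in nhdsWithin 1 (Iio 1), t ≠ 0 :=
  nhdsWithin_le_nhds (eventually_ne_nhds one_ne_zero)

lemma T1 {s : ℝ} (hs : 1 < s) :
    Tendsto (fun t : ℝ => (1 - t) * phi s (1 - t)) (nhdsWithin 1 (Iio 1))
      (nhds (2 / ell s)) :=
  (tendsto_mul_phi hs).comp tendsto_one_sub

lemma T2 {s : ℝ} (hs : 1 < s) :
    Tendsto (fun t : ℝ => (1 - t) ^ 2 * -phi' s (1 - t)) (nhdsWithin 1 (Iio 1))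
      (nhds (2 / ell s)) := by
  have h := ((tendsto_sq_phi' hs).comp tendsto_one_sub).neg
  rw [show -(-2 / ell s) = 2 / ell s by ring] at h
  refine h.congr fun t => ?_
  simp only [Function.comp]
  ring

lemma T3 {s : ℝ} (hs : 1 ≤ s) :
    Tendsto (fun t : ℝ => (1 - t) * phi s t) (nhdsWithin 1 (Iio 1)) (nhds 0) := by
  have h0 : Tendsto (fun t : ℝ => 1 - t) (nhdsWithin 1 (Iio 1)) (nhds 0) := by
    have hc : Continuous fun t : ℝ => 1 - t := by continuity
    have := hc.tendsto (1 : ℝ)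
    simp only [sub_self] at this
    exact this.mono_left nhdsWithin_le_nhds
  rcases eq_or_lt_of_le hs with h1 | h1
  · subst h1
    refine Tendsto.congr' ?_ h0
    filter_upwards [eventually_ne_zero] with t ht
    rw [phi_eq_one ht, mul_one]
  · have hp : Tendsto (phi s) (nhdsWithin 1 (Iio 1)) (nhds (phi s 1)) :=
      ((phi_continuousAt h1 one_pos).tendsto).mono_left nhdsWithin_le_nhds
    simpa using h0.mul hp

lemma T4 {s : ℝ} (hs : 1 ≤ s) :
    Tendsto (fun t : ℝ => (1 - t) ^ 2 * phi' s t) (nhdsWithin 1 (Iio 1)) (nhds 0) := by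
  have h0 : Tendsto (fun t : ℝ => (1 - t) ^ 2) (nhdsWithin 1 (Iio 1)) (nhds 0) := by
    have hc : Continuous fun t : ℝ => (1 - t) ^ 2 := by continuity
    have := hc.tendsto (1 : ℝ)
    simp only [sub_self] at this
    norm_num at this
    exact this.mono_left nhdsWithin_le_nhds
  rcases eq_or_lt_of_le hs with h1 | h1
  · subst h1
    refine Tendsto.congr' ?_ (tendsto_const_nhds (α := ℝ))
    filter_upwards [eventually_ne_zero] with t ht
    rw [phi'_one ht, mul_zero]
  · have hp : Tendsto (phi' s) (nhdsWithin 1 (Iio 1)) (nhds (phi' s 1)) :=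
      ((phi'_continuousAt h1 one_pos).tendsto).mono_left nhdsWithin_le_nhds
    simpa using h0.mul hp

lemma phi_one_le {s : ℝ} (hs : 1 ≤ s) {t : ℝ} (ht : 0 < t) : 1 ≤ phi s t := by
  rcases eq_or_lt_of_le hs with h1 | h1
  · subst h1; rw [phi_eq_one ht.ne']
  · have hd := den_pos h1 ht
    rw [phi, le_div_iff₀ hd, one_mul]
    have : 0 ≤ (s - 1) ^ t := Real.rpow_nonneg (by linarith) t
    linarith


variable {n : Type*} [Fintype n] [DecidableEq n]



lemma ring_inverse_eq {M N : Matrix n n ℂ} (h : M * N = 1) (h' : N * M = 1) :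
    Ring.inverse M = N := by
  have : M = ((⟨M, N, h, h'⟩ : (Matrix n n ℂ)ˣ) : Matrix n n ℂ) := rfl
  rw [this, Ring.inverse_unit]
  rfl

lemma ring_inverse_smul {c : ℝ} (hc : c ≠ 0) {M : Matrix n n ℂ} (hM : IsUnit M) :
    Ring.inverse (c • M) = c⁻¹ • Ring.inverse M := by
  obtain ⟨u, rfl⟩ := hM
  refine ring_inverse_eq ?_ ?_ <;>
    rw [Ring.inverse_unit, smul_mul_assoc, mul_smul_comm, smul_smul]
  · rw [mul_inv_cancel₀ hc, u.mul_inv, one_smul]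
  · rw [inv_mul_cancel₀ hc, u.inv_mul, one_smul]

lemma conj_diag_eq_sum (U : Matrix n n ℂ) (c : n → ℝ) :
    U * Matrix.diagonal (fun i => (c i : ℂ)) * star U
      = ∑ k, c k • (U * Matrix.single k k 1 * star U) := by
  have hdiag : Matrix.diagonal (fun i => (c i : ℂ))
      = ∑ k, c k • Matrix.single k k (1 : ℂ) := by
    ext i j
    rw [Matrix.sum_apply]
    by_cases hij : i = j
    · subst hij
      rw [Matrix.diagonal_apply_eq]
      rw [Finset.sum_eq_single i]
      · simp [Matrix.single, Complex.real_smul]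
      · intro k _ hk
        simp [Matrix.single, hk]
      · simp
    · rw [Matrix.diagonal_apply_ne _ hij]
      symm
      apply Finset.sum_eq_zero
      intro k _
      simp [Matrix.single]
      intro h1 h2
      exact absurd (h1.symm.trans h2) hij
  rw [hdiag, Finset.mul_sum, Finset.sum_mul]
  refine Finset.sum_congr rfl fun k _ => ?_
  rw [Matrix.mul_smul, Matrix.smul_mul]

lemma cfc_sum_form {A : Matrix n n ℂ} (hA : A.IsHermitian) (f : ℝ → ℝ) :
    cfc f A = ∑ k, f (hA.eigenvalues k) •
      ((hA.eigenvectorUnitary : Matrix n n ℂ) * Matrix.single k k 1 *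
        star (hA.eigenvectorUnitary : Matrix n n ℂ)) := by
  rw [hA.cfc_eq, Matrix.IsHermitian.cfc, ← conj_diag_eq_sum]
  rfl

lemma conj_diag_posDef {U : Matrix n n ℂ} (hU : U * star U = 1) {d : n → ℝ}
    (hd : ∀ i, 1 ≤ d i) :
    (U * Matrix.diagonal (fun i => (d i : ℂ)) * star U).PosDef := by
  have hsplit : U * Matrix.diagonal (fun i => (d i : ℂ)) * star U
      = U * Matrix.diagonal (fun i => ((d i - 1 : ℝ) : ℂ)) * star U + 1 := by
    have : Matrix.diagonal (fun i => (d i : ℂ))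
        = Matrix.diagonal (fun i => ((d i - 1 : ℝ) : ℂ)) + 1 := by
      rw [← Matrix.diagonal_one, Matrix.diagonal_add]
      congr 1
      ext i
      push_cast
      ring
    rw [this, Matrix.mul_add, Matrix.add_mul, Matrix.mul_one, hU]
  rw [hsplit]
  refine Matrix.PosDef.posSemidef_add ?_ Matrix.PosDef.one
  have hpsd : (Matrix.diagonal (fun i => ((d i - 1 : ℝ) : ℂ))).PosSemidef := by
    refine Matrix.posSemidef_diagonal_iff.mpr fun i => ?_
    rw [Complex.zero_le_real]
    linarith [hd i]
  simpa [Matrix.star_eq_conjTranspose] using hpsd.mul_mul_conjTranspose_same U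

noncomputable def lam (y : n → ℂ) : Matrix n n ℂ →L[ℝ] ℝ := by
  haveI : FiniteDimensional ℝ (Matrix n n ℂ) := Module.Finite.trans ℂ (Matrix n n ℂ)
  exact LinearMap.toContinuousLinearMap
    { toFun := fun M => (star y ⬝ᵥ (M *ᵥ y)).re
      map_add' := fun M N => by
        rw [Matrix.add_mulVec, dotProduct_add, Complex.add_re]
      map_smul' := fun c M => by
        rw [Matrix.smul_mulVec, dotProduct_smul, Complex.smul_re]
        rfl }

lemma lam_apply (y : n → ℂ) (M : Matrix n n ℂ) :
    lam y M = (star y ⬝ᵥ (M *ᵥ y)).re := by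
  rw [lam]
  simp



lemma star_dot_self_eq_one {A : Matrix n n ℂ} (hA : A.IsHermitian) (k : n) :
    star (⇑(hA.eigenvectorBasis k) : n → ℂ) ⬝ᵥ (⇑(hA.eigenvectorBasis k) : n → ℂ) = 1 := by
  have h1 := hA.eigenvectorBasis.orthonormal.1 k
  have h2 := EuclideanSpace.inner_eq_star_dotProduct (𝕜 := ℂ)
    (hA.eigenvectorBasis k) (hA.eigenvectorBasis k)
  rw [inner_self_eq_norm_sq_to_K, h1] at h2
  rw [dotProduct_comm, ← h2]
  norm_num

lemma eigenvalues_ge {A : Matrix n n ℂ} (hA : (A - 1).PosSemidef) (hAh : A.IsHermitian)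
    (k : n) : 1 ≤ hAh.eigenvalues k := by
  have h := hA.re_dotProduct_nonneg (⇑(hAh.eigenvectorBasis k))
  have hmv : (A - 1) *ᵥ (⇑(hAh.eigenvectorBasis k) : n → ℂ)
      = hAh.eigenvalues k • ⇑(hAh.eigenvectorBasis k) - ⇑(hAh.eigenvectorBasis k) := by
    rw [Matrix.sub_mulVec, hAh.mulVec_eigenvectorBasis, Matrix.one_mulVec]
  rw [hmv, dotProduct_sub, dotProduct_smul, star_dot_self_eq_one hAh k] at h
  simp only [map_sub, RCLike.smul_re, RCLike.one_re, smul_eq_mul, mul_one] at h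
  linarith

lemma eigenvalues_gt {A : Matrix n n ℂ} (hA : (A - 1).PosDef) (hAh : A.IsHermitian)
    (k : n) : 1 < hAh.eigenvalues k := by
  have hx0 : (⇑(hAh.eigenvectorBasis k) : n → ℂ) ≠ 0 := by
    have hne := hAh.eigenvectorBasis.orthonormal.ne_zero k
    intro hc
    apply hne
    ext i
    exact congrFun hc i
  have h := hA.re_dotProduct_pos hx0
  have hmv : (A - 1) *ᵥ (⇑(hAh.eigenvectorBasis k) : n → ℂ)
      = hAh.eigenvalues k • ⇑(hAh.eigenvectorBasis k) - ⇑(hAh.eigenvectorBasis k) := by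
    rw [Matrix.sub_mulVec, hAh.mulVec_eigenvectorBasis, Matrix.one_mulVec]
  rw [hmv, dotProduct_sub, dotProduct_smul, star_dot_self_eq_one hAh k] at h
  simp only [map_sub, RCLike.smul_re, RCLike.one_re, smul_eq_mul, mul_one] at h
  linarith


end HDispAux

namespace HDispAux

variable {n : Type*} [Fintype n] [DecidableEq n]

attribute [local instance] Matrix.linftyOpNormedRing Matrix.linftyOpNormedAlgebra

lemma conj_diag_mul {U : Matrix n n ℂ} (hU' : star U * U = 1) (c d : n → ℂ) :
    (U * Matrix.diagonal c * star U) * (U * Matrix.diagonal d * star U)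
      = U * Matrix.diagonal (fun i => c i * d i) * star U := by
  have : (U * Matrix.diagonal c * star U) * (U * Matrix.diagonal d * star U)
      = U * Matrix.diagonal c * (star U * U) * Matrix.diagonal d * star U := by
    simp only [Matrix.mul_assoc]
  rw [this, hU', Matrix.mul_one]
  rw [Matrix.mul_assoc U, Matrix.diagonal_mul_diagonal]

lemma mlog_form {A : Matrix n n ℂ} (hA2 : (A - 1).PosDef) (hAh : A.IsHermitian) :
    mlog ((A - 1) * (A + 1)⁻¹)
      = ∑ j, (-(ell (hAh.eigenvalues j))) •
        ((hAh.eigenvectorUnitary : Matrix n n ℂ) * Matrix.single j j 1 *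
          star (hAh.eigenvectorUnitary : Matrix n n ℂ)) := by
  have hsa : IsSelfAdjoint A := hAh
  have hgt : ∀ x ∈ spectrum ℝ A, 1 < x := by
    rw [hAh.spectrum_real_eq_range_eigenvalues]
    rintro x ⟨j, rfl⟩
    exact eigenvalues_gt hA2 hAh j
  have hfin := A.finite_real_spectrum
  have hc : ∀ f : ℝ → ℝ, ContinuousOn f (spectrum ℝ A) := fun f => hfin.continuousOn f
  have h1 : A - 1 = cfc (fun s : ℝ => s - 1) A := by
    have h := cfc_sub (R := ℝ) (fun x => x) (fun _ => (1:ℝ)) A (hc _) (hc _)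
    rw [cfc_id' ℝ A, cfc_const (1:ℝ) A, _root_.map_one] at h
    rw [h]
  have h2 : (A + 1)⁻¹ = cfc (fun s : ℝ => (s + 1)⁻¹) A := by
    have hA1 : A + 1 = cfc (fun s : ℝ => s + 1) A := by
      have h := cfc_add (R := ℝ) A (fun x => x) (fun _ => (1:ℝ)) (hc _) (hc _)
      rw [cfc_id' ℝ A, cfc_const (1:ℝ) A, _root_.map_one] at h
      rw [h]
    refine Matrix.inv_eq_right_inv ?_
    rw [hA1, ← cfc_mul _ _ A (hc _) (hc _)]
    have heq : cfc (fun s : ℝ => (s + 1) * (s + 1)⁻¹) A = cfc (fun _ : ℝ => (1:ℝ)) A := by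
      refine cfc_congr fun x hx => ?_
      have := hgt x hx
      exact mul_inv_cancel₀ (by linarith)
    rw [heq, cfc_const (1:ℝ) A, _root_.map_one]
  have h3 : (A - 1) * (A + 1)⁻¹ = cfc (fun s : ℝ => (s - 1) * (s + 1)⁻¹) A := by
    rw [h1, h2, ← cfc_mul _ _ A (hc _) (hc _)]
  have h4 : mlog ((A - 1) * (A + 1)⁻¹)
      = cfc (fun s : ℝ => Real.log ((s - 1) * (s + 1)⁻¹)) A := by
    rw [mlog, h3, ← cfc_comp' Real.log (fun s : ℝ => (s - 1) * (s + 1)⁻¹) A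
      ((hfin.image _).continuousOn Real.log) (hc _) hsa]
  rw [h4, cfc_sum_form hAh]
  refine Finset.sum_congr rfl fun j _ => ?_
  have hj := eigenvalues_gt hA2 hAh j
  rw [← div_eq_mul_inv, Real.log_div (by linarith) (by linarith), ell]
  ring_nf

end HDispAux


open HDispAux in
/-- **Limit of the derivative of the displacement term.**  For Hermitian `A₁ ⪰ I`, `A₂ ≻ I`,
`y` a vector and `κ > 0`, `h(t) = −2κ⟨B(t)⁻¹ y, y⟩` with `B(t) = f_t(A₁) + f_{1−t}(A₂)` is
differentiable on `(0,1)` and `h'(t) → −κ⟨log[(A₂−I)(A₂+I)⁻¹] y, y⟩` as `t ↗ 1`. -/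
theorem hDisp_deriv_limit
    (A₁ A₂ : Matrix n n ℂ) (hA₁ : (A₁ - 1).PosSemidef) (hA₂ : (A₂ - 1).PosDef)
    (y : n → ℂ) (κ : ℝ) (hκ : 0 < κ) :
    ∃ D : ℝ → ℝ,
      (∀ t ∈ Set.Ioo (0 : ℝ) 1, HasDerivAt (hDisp A₁ A₂ y κ) (D t) t) ∧
      Tendsto D (nhdsWithin 1 (Set.Iio 1))
        (nhds (-κ * (star y ⬝ᵥ (mlog ((A₂ - 1) * (A₂ + 1)⁻¹) *ᵥ y)).re)) := by
  classical
  letI : NormedRing (Matrix n n ℂ) := Matrix.linftyOpNormedRing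
  letI : NormedAlgebra ℝ (Matrix n n ℂ) := Matrix.linftyOpNormedAlgebra
  have hA₁h : A₁.IsHermitian := by
    have h := hA₁.isHermitian
    have h2 : A₁ = (A₁ - 1) + 1 := by rw [sub_add_cancel]
    rw [h2]; exact h.add Matrix.isHermitian_one
  have hA₂h : A₂.IsHermitian := by
    have h := hA₂.isHermitian
    have h2 : A₂ = (A₂ - 1) + 1 := by rw [sub_add_cancel]
    rw [h2]; exact h.add Matrix.isHermitian_one
  set μ₁ : n → ℝ := hA₁h.eigenvalues with hμ₁
  set μ₂ : n → ℝ := hA₂h.eigenvalues with hμ₂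
  set U₁ : Matrix n n ℂ := (hA₁h.eigenvectorUnitary : Matrix n n ℂ) with hU₁def
  set U₂ : Matrix n n ℂ := (hA₂h.eigenvectorUnitary : Matrix n n ℂ) with hU₂def
  set P₁ : n → Matrix n n ℂ := fun k => U₁ * Matrix.single k k 1 * star U₁ with hP₁
  set P₂ : n → Matrix n n ℂ := fun k => U₂ * Matrix.single k k 1 * star U₂ with hP₂
  have hb₁ : ∀ k, 1 ≤ μ₁ k := fun k => eigenvalues_ge hA₁ hA₁h k
  have hb₂ : ∀ j, 1 < μ₂ j := fun j => eigenvalues_gt hA₂ hA₂h j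
  have hU₁m : U₁ * star U₁ = 1 := Matrix.mem_unitaryGroup_iff.mp hA₁h.eigenvectorUnitary.2
  have hU₂m : U₂ * star U₂ = 1 := Matrix.mem_unitaryGroup_iff.mp hA₂h.eigenvectorUnitary.2
  have hU₂m' : star U₂ * U₂ = 1 := Matrix.mem_unitaryGroup_iff'.mp hA₂h.eigenvectorUnitary.2
  set Bf : ℝ → Matrix n n ℂ := fun t => fPowMat t A₁ + fPowMat (1 - t) A₂ with hBf
  have hBsum : ∀ t : ℝ,
      Bf t = (∑ k, phi (μ₁ k) t • P₁ k) + ∑ j, phi (μ₂ j) (1 - t) • P₂ j := by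
    intro t
    rw [hBf]
    simp only [fPowMat]
    rw [cfc_sum_form hA₁h, cfc_sum_form hA₂h]
    simp only [phi, hP₁, hP₂, hμ₁, hμ₂, hU₁def, hU₂def]
  have hpos : ∀ t ∈ Set.Ioo (0:ℝ) 1, (Bf t).PosDef := by
    intro t ht
    have hp1 : (fPowMat t A₁).PosDef := by
      rw [fPowMat, hA₁h.cfc_eq, Matrix.IsHermitian.cfc]
      exact conj_diag_posDef hU₁m
        (d := fun k => phi (μ₁ k) t) (fun k => phi_one_le (hb₁ k) ht.1)
    have hp2 : (fPowMat (1 - t) A₂).PosDef := by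
      rw [fPowMat, hA₂h.cfc_eq, Matrix.IsHermitian.cfc]
      exact conj_diag_posDef hU₂m
        (d := fun k => phi (μ₂ k) (1 - t))
        (fun k => phi_one_le (hb₂ k).le (by linarith [ht.2]))
    exact hp1.add hp2
  have hunit : ∀ t ∈ Set.Ioo (0:ℝ) 1, IsUnit (Bf t) := fun t ht => (hpos t ht).isUnit
  set Bd : ℝ → Matrix n n ℂ := fun t =>
    (∑ k, phi' (μ₁ k) t • P₁ k) + ∑ j, (-phi' (μ₂ j) (1 - t)) • P₂ j with hBd
  have hBderiv : ∀ t ∈ Set.Ioo (0:ℝ) 1, HasDerivAt Bf (Bd t) t := by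
    intro t ht
    have hrw : Bf = fun t => (∑ k, phi (μ₁ k) t • P₁ k) + ∑ j, phi (μ₂ j) (1 - t) • P₂ j :=
      funext hBsum
    rw [hrw, hBd]
    have h1 : HasDerivAt (fun t => ∑ k, phi (μ₁ k) t • P₁ k)
        (∑ k, phi' (μ₁ k) t • P₁ k) t :=
      HasDerivAt.fun_sum fun k _ => (phi_hasDerivAt (hb₁ k) ht.1).smul_const (P₁ k)
    have h2 : HasDerivAt (fun t => ∑ j, phi (μ₂ j) (1 - t) • P₂ j)
        (∑ j, (-phi' (μ₂ j) (1 - t)) • P₂ j) t := by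
      refine HasDerivAt.fun_sum fun j _ => ?_
      have hin : HasDerivAt (fun u : ℝ => 1 - u) (-1) t := by
        simpa using (hasDerivAt_id t).const_sub 1
      have hphi := (phi_hasDerivAt (hb₂ j).le (show (0:ℝ) < 1 - t by linarith [ht.2])).comp t hin
      rw [show phi' (μ₂ j) (1 - t) * -1 = -phi' (μ₂ j) (1 - t) by ring] at hphi
      exact hphi.smul_const (P₂ j)
    exact h1.add h2
  refine ⟨fun t => -2 * κ * lam y (-(Ring.inverse (Bf t) * Bd t * Ring.inverse (Bf t))), ?_, ?_⟩
  · intro t ht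
    have hmain : HasDerivAt (fun t => -2 * κ * lam y (Ring.inverse (Bf t)))
        (-2 * κ * lam y (-(Ring.inverse (Bf t) * Bd t * Ring.inverse (Bf t)))) t := by
      obtain ⟨u, hu⟩ := hunit t ht
      have hiu : (↑u⁻¹ : Matrix n n ℂ) = Ring.inverse (Bf t) := by
        rw [← hu, Ring.inverse_unit]
      have hF : HasFDerivAt (Ring.inverse : Matrix n n ℂ → Matrix n n ℂ)
          (-(ContinuousLinearMap.mulLeftRight ℝ _ (Ring.inverse (Bf t)) (Ring.inverse (Bf t))))
          (Bf t) := by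
        have h := hasFDerivAt_ringInverse (𝕜 := ℝ) u
        rw [hu, hiu] at h
        exact h
      have hinv : HasDerivAt (fun t => Ring.inverse (Bf t))
          (-(Ring.inverse (Bf t) * Bd t * Ring.inverse (Bf t))) t := by
        have h := hF.comp_hasDerivAt t (hBderiv t ht)
        simp only [ContinuousLinearMap.neg_apply, ContinuousLinearMap.mulLeftRight_apply] at h
        exact h
      have hlam := ((lam y).hasFDerivAt).comp_hasDerivAt t hinv
      exact hlam.const_mul (-2 * κ)
    have hfun : hDisp A₁ A₂ y κ = fun t => -2 * κ * lam y (Ring.inverse (Bf t)) := by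
      funext t
      simp only [hDisp, lam_apply, Matrix.nonsing_inv_eq_ringInverse, hBf]
    rw [hfun]
    exact hmain
  · have hl2 : ∀ j, 0 < ell (μ₂ j) := fun j => ell_pos (hb₂ j)
    set X : Matrix n n ℂ := ∑ j, (ell (μ₂ j) / 2) • P₂ j with hX
    set G₁ : Matrix n n ℂ := ∑ j, (2 / ell (μ₂ j)) • P₂ j with hG₁
    have hG₁diag : G₁ = U₂ * Matrix.diagonal (fun j => ((2 / ell (μ₂ j) : ℝ) : ℂ)) * star U₂ := by
      rw [hG₁, conj_diag_eq_sum U₂ (fun j => 2 / ell (μ₂ j))]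
    have hXdiag : X = U₂ * Matrix.diagonal (fun j => ((ell (μ₂ j) / 2 : ℝ) : ℂ)) * star U₂ := by
      rw [hX, conj_diag_eq_sum U₂ (fun j => ell (μ₂ j) / 2)]
    have hprod1 : (fun i => ((2 / ell (μ₂ i) : ℝ) : ℂ) * ((ell (μ₂ i) / 2 : ℝ) : ℂ))
        = fun _ => (1 : ℂ) := by
      funext i
      have he := (hl2 i).ne'
      rw [← Complex.ofReal_mul]
      norm_cast
      field_simp
      try ring
    have hprod2 : (fun i => ((ell (μ₂ i) / 2 : ℝ) : ℂ) * ((2 / ell (μ₂ i) : ℝ) : ℂ))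
        = fun _ => (1 : ℂ) := by
      funext i
      have he := (hl2 i).ne'
      rw [← Complex.ofReal_mul]
      norm_cast
      field_simp
      try ring
    have hGX : G₁ * X = 1 := by
      rw [hG₁diag, hXdiag, conj_diag_mul hU₂m', hprod1]
      rw [Matrix.diagonal_one, Matrix.mul_one, hU₂m]
    have hXG : X * G₁ = 1 := by
      rw [hG₁diag, hXdiag, conj_diag_mul hU₂m', hprod2]
      rw [Matrix.diagonal_one, Matrix.mul_one, hU₂m]
    have hG₁unit : IsUnit G₁ := ⟨⟨G₁, X, hGX, hXG⟩, rfl⟩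
    have hG₁inv : Ring.inverse G₁ = X := ring_inverse_eq hGX hXG
    set Gf : ℝ → Matrix n n ℂ := fun t => (1 - t) • Bf t with hGf
    set Mf : ℝ → Matrix n n ℂ := fun t => (1 - t) ^ 2 • Bd t with hMf
    have hGsum : Gf = fun t => (∑ k, ((1 - t) * phi (μ₁ k) t) • P₁ k)
        + ∑ j, ((1 - t) * phi (μ₂ j) (1 - t)) • P₂ j := by
      funext t
      rw [hGf]
      simp only [hBsum t, smul_add, Finset.smul_sum, smul_smul]
    have hMsum : Mf = fun t => (∑ k, ((1 - t) ^ 2 * phi' (μ₁ k) t) • P₁ k)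
        + ∑ j, ((1 - t) ^ 2 * -phi' (μ₂ j) (1 - t)) • P₂ j := by
      funext t
      rw [hMf, hBd]
      simp only [smul_add, Finset.smul_sum, smul_smul]
    have hGlim : Tendsto Gf (nhdsWithin 1 (Set.Iio 1)) (nhds G₁) := by
      rw [hGsum]
      have h1 : Tendsto (fun t => ∑ k, ((1 - t) * phi (μ₁ k) t) • P₁ k)
          (nhdsWithin 1 (Set.Iio 1)) (nhds (∑ k, (0:ℝ) • P₁ k)) :=
        tendsto_finset_sum _ fun k _ => (T3 (hb₁ k)).smul_const (P₁ k)
      have h2 : Tendsto (fun t => ∑ j, ((1 - t) * phi (μ₂ j) (1 - t)) • P₂ j)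
          (nhdsWithin 1 (Set.Iio 1)) (nhds G₁) := by
        rw [hG₁]
        exact tendsto_finset_sum _ fun j _ => (T1 (hb₂ j)).smul_const (P₂ j)
      have := h1.add h2
      simpa using this
    have hMlim : Tendsto Mf (nhdsWithin 1 (Set.Iio 1)) (nhds G₁) := by
      rw [hMsum]
      have h1 : Tendsto (fun t => ∑ k, ((1 - t) ^ 2 * phi' (μ₁ k) t) • P₁ k)
          (nhdsWithin 1 (Set.Iio 1)) (nhds (∑ k, (0:ℝ) • P₁ k)) :=
        tendsto_finset_sum _ fun k _ => (T4 (hb₁ k)).smul_const (P₁ k)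
      have h2 : Tendsto (fun t => ∑ j, ((1 - t) ^ 2 * -phi' (μ₂ j) (1 - t)) • P₂ j)
          (nhdsWithin 1 (Set.Iio 1)) (nhds G₁) := by
        rw [hG₁]
        exact tendsto_finset_sum _ fun j _ => (T2 (hb₂ j)).smul_const (P₂ j)
      have := h1.add h2
      simpa using this
    have hRGlim : Tendsto (fun t => Ring.inverse (Gf t)) (nhdsWithin 1 (Set.Iio 1)) (nhds X) := by
      have hcont : ContinuousAt (Ring.inverse : Matrix n n ℂ → Matrix n n ℂ) G₁ := by
        obtain ⟨u, hu⟩ := hG₁unit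
        rw [← hu]
        exact NormedRing.inverse_continuousAt u
      have h := hcont.tendsto.comp hGlim
      rw [hG₁inv] at h
      exact h
    have hDlim : Tendsto
        (fun t => -2 * κ * lam y (-(Ring.inverse (Gf t) * Mf t * Ring.inverse (Gf t))))
        (nhdsWithin 1 (Set.Iio 1)) (nhds (-2 * κ * lam y (-(X * G₁ * X)))) := by
      have hmat : Tendsto (fun t => -(Ring.inverse (Gf t) * Mf t * Ring.inverse (Gf t)))
          (nhdsWithin 1 (Set.Iio 1)) (nhds (-(X * G₁ * X))) :=
        ((hRGlim.mul hMlim).mul hRGlim).neg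
      have hcomp := ((lam y).continuous.tendsto _).comp hmat
      exact hcomp.const_mul (-2 * κ)
    have hIoo : ∀ᶠ t in nhdsWithin 1 (Set.Iio 1), t ∈ Set.Ioo (0:ℝ) 1 :=
      eventually_of_mem (Ioo_mem_nhdsLT_of_mem (by norm_num : (1:ℝ) ∈ Set.Ioc (0:ℝ) 1))
        fun t ht => ht
    have hcongr : ∀ᶠ t in nhdsWithin 1 (Set.Iio 1),
        -2 * κ * lam y (-(Ring.inverse (Gf t) * Mf t * Ring.inverse (Gf t)))
          = -2 * κ * lam y (-(Ring.inverse (Bf t) * Bd t * Ring.inverse (Bf t))) := by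
      filter_upwards [hIoo] with t ht
      have h1t : (1:ℝ) - t ≠ 0 := by
        have := ht.2
        intro h
        linarith
      have hRB : Ring.inverse (Bf t) = (1 - t) • Ring.inverse (Gf t) := by
        have h := ring_inverse_smul h1t (hunit t ht)
        rw [hGf]
        rw [h, smul_smul, mul_inv_cancel₀ h1t, one_smul]
      have hmm : Ring.inverse (Gf t) * Mf t * Ring.inverse (Gf t)
          = Ring.inverse (Bf t) * Bd t * Ring.inverse (Bf t) := by
        rw [hRB, hMf]
        simp only [Matrix.smul_mul, Matrix.mul_smul, smul_smul]
        congr 1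
        ring
      rw [hmm]
    have hfinal := hDlim.congr' hcongr
    have hm : mlog ((A₂ - 1) * (A₂ + 1)⁻¹) = (-2 : ℝ) • X := by
      rw [mlog_form hA₂ hA₂h, hX, Finset.smul_sum]
      refine Finset.sum_congr rfl fun j _ => ?_
      rw [smul_smul, ← hμ₂, ← hU₂def]
      simp only [hP₂]
      congr 1
      ring
    have hXGX : X * G₁ * X = X := by rw [hXG, Matrix.one_mul]
    have hval : -κ * (star y ⬝ᵥ (mlog ((A₂ - 1) * (A₂ + 1)⁻¹) *ᵥ y)).re
        = -2 * κ * lam y (-(X * G₁ * X)) := by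
      rw [hXGX, hm, ← lam_apply, _root_.map_smul, map_neg, smul_eq_mul]
      ring
    rw [hval]
    exact hfinal

end
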